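/- Fix additive utilities u_{ij} ∈ [0,1] for n agents over a ground set W with m elements, and define F(c) = Σ_{i∈[n]} ln(1 + u_i(c)) for a finite set c ⊆ W, where u_i(c) = Σ_{j∈c} u_{ij}. Then for any c ⊆ W, Σ_{j∈c} (F(c) - F(c \ {j})) ≤ n. -/

import Mathlib

open Real Finset

lemma smooth_nash_aux {W : Type*} [DecidableEq W] (c : Finset W)
    (f : W → ℝ) (hf : ∀ j, f j ∈ Set.Icc (0 : ℝ) 1) :
    ∑ j ∈ c, (Real.log (1 + ∑ j' ∈ c, f j') -
        Real.log (1 + ∑ j' ∈ c.erase j, f j')) ≤ 1 := by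
  set S := ∑ j' ∈ c, f j' with hS
  have hS0 : 0 ≤ S := Finset.sum_nonneg fun j _ => (hf j).1
  rcases eq_or_lt_of_le hS0 with h0 | hpos
  · have hz : ∀ j ∈ c, f j = 0 := by
      intro j hj
      have := Finset.sum_eq_zero_iff_of_nonneg (fun j _ => (hf j).1) |>.mp h0.symm
      exact this j hj
    have : ∀ j ∈ c, Real.log (1 + S) - Real.log (1 + ∑ j' ∈ c.erase j, f j') = 0 := by
      intro j hj
      have he : ∑ j' ∈ c.erase j, f j' = S - f j := Finset.sum_erase_eq_sub hj
      rw [he, hz j hj, ← h0]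
      ring_nf
    rw [Finset.sum_congr rfl this]
    simp
  · have hbound : ∀ j ∈ c, Real.log (1 + S) -
        Real.log (1 + ∑ j' ∈ c.erase j, f j') ≤ f j / S := by
      intro j hj
      have he : ∑ j' ∈ c.erase j, f j' = S - f j := Finset.sum_erase_eq_sub hj
      rw [he]
      have hf0 := (hf j).1
      have hf1 := (hf j).2
      have hd : 0 < 1 + S - f j := by linarith
      have hq : 0 < (1 + S) / (1 + S - f j) := by positivity
      have h2 : 1 + (S - f j) = 1 + S - f j := by ring
      have h1 : Real.log (1 + S) - Real.log (1 + S - f j)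
          = Real.log ((1 + S) / (1 + S - f j)) := by
        rw [Real.log_div (by linarith) (by linarith)]
      rw [h2, h1]
      calc Real.log ((1 + S) / (1 + S - f j)) ≤ (1 + S) / (1 + S - f j) - 1 :=
            Real.log_le_sub_one_of_pos hq
        _ = f j / (1 + S - f j) := by field_simp; ring
        _ ≤ f j / S := by
            apply div_le_div_of_nonneg_left hf0 hpos
            linarith
    calc ∑ j ∈ c, (Real.log (1 + S) - Real.log (1 + ∑ j' ∈ c.erase j, f j'))
        ≤ ∑ j ∈ c, f j / S := Finset.sum_le_sum hbound
      _ = S / S := by rw [← Finset.sum_div]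
      _ = 1 := div_self (ne_of_gt hpos)

/-- For the smooth Nash welfare objective `F(c) = ∑ i, ln(1 + u_i(c))` with additive
utilities `u_{ij} ∈ [0,1]`, the total marginal contribution of the elements of `c`
is at most `n`: `∑_{j ∈ c} (F(c) - F(c \ {j})) ≤ n`. -/
theorem smooth_nash_marginals_le
    {n : ℕ} {W : Type*} [DecidableEq W]
    (u : Fin n → W → ℝ) (hu : ∀ i j, u i j ∈ Set.Icc (0 : ℝ) 1)
    (c : Finset W) :
    ∑ j ∈ c,
        ((∑ i, Real.log (1 + ∑ j' ∈ c, u i j')) -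
         (∑ i, Real.log (1 + ∑ j' ∈ c.erase j, u i j')))
      ≤ (n : ℝ) := by
  have h : ∀ j ∈ c, (∑ i, Real.log (1 + ∑ j' ∈ c, u i j')) -
      (∑ i, Real.log (1 + ∑ j' ∈ c.erase j, u i j')) =
      ∑ i, (Real.log (1 + ∑ j' ∈ c, u i j') -
        Real.log (1 + ∑ j' ∈ c.erase j, u i j')) := by
    intro j _; rw [Finset.sum_sub_distrib]
  rw [Finset.sum_congr rfl h, Finset.sum_comm]
  calc ∑ i, ∑ j ∈ c, (Real.log (1 + ∑ j' ∈ c, u i j') -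
        Real.log (1 + ∑ j' ∈ c.erase j, u i j'))
      ≤ ∑ _i : Fin n, (1 : ℝ) :=
        Finset.sum_le_sum fun i _ => smooth_nash_aux c (u i) (hu i)
    _ = n := by simp
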